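/- Let $G$ be a group and let $K$ be an algebraically closed field of characteristic $0$. Fix two characters $\chi_1,\chi_2 : G \to K^\times$. Suppose that $\rho : G \to \mathrm{GL}_2(K)$ is a group homomorphism satisfying: (i) for every $g \in G$, the characteristic polynomial of $\rho(g)$ equals $(X-\chi_1(g))(X-\chi_2(g))$; and (ii) for every $g_1, g_2 \in G$, $(\rho(g_1)-\chi_1(g_1)\cdot I)(\rho(g_2)-\chi_2(g_2)\cdot I)=0$ as $2\times 2$ matrices. Then there exists $M \in \mathrm{GL}_2(K)$ and a function $\kappa : G \to K$ such that for every $g \in G$, $M^{-1}\rho(g)M$ is the upper triangular matrix with first row $(\chi_1(g), \kappa(g))$ and second row $(0, \chi_2(g))$. -/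

import Mathlib

open Polynomial Matrix

set_option maxHeartbeats 1000000 in
/-- **Ordering lemma.** If a 2-dimensional representation `ρ` of a group `G` over an
algebraically closed field `K` of characteristic zero has characteristic polynomials
`(X - χ₁(g))(X - χ₂(g))` and satisfies
`(ρ(g₁) - χ₁(g₁))(ρ(g₂) - χ₂(g₂)) = 0` for all `g₁, g₂`, then `ρ` is conjugate to an
upper triangular representation with ordered diagonal characters `χ₁, χ₂`. -/
theorem orderedUpperTriangular
    {G : Type*} [Group G] {K : Type*} [Field K] [IsAlgClosed K] [CharZero K]
    (χ₁ χ₂ : G →* Kˣ) (ρ : G →* GL (Fin 2) K)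
    (hchar : ∀ g : G, ((ρ g : Matrix (Fin 2) (Fin 2) K)).charpoly
      = (X - C (χ₁ g : K)) * (X - C (χ₂ g : K)))
    (hprod : ∀ g₁ g₂ : G,
      ((ρ g₁ : Matrix (Fin 2) (Fin 2) K) - (χ₁ g₁ : K) • (1 : Matrix (Fin 2) (Fin 2) K)) *
      ((ρ g₂ : Matrix (Fin 2) (Fin 2) K) - (χ₂ g₂ : K) • (1 : Matrix (Fin 2) (Fin 2) K)) = 0) :
    ∃ (M : GL (Fin 2) K) (κ : G → K), ∀ g : G,
      ((M⁻¹ : GL (Fin 2) K) : Matrix (Fin 2) (Fin 2) K) *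
        (ρ g : Matrix (Fin 2) (Fin 2) K) * (M : Matrix (Fin 2) (Fin 2) K)
        = !![(χ₁ g : K), κ g; 0, (χ₂ g : K)] := by
  classical
  have htr : ∀ g : G, trace (ρ g : Matrix (Fin 2) (Fin 2) K) = (χ₁ g : K) + (χ₂ g : K) := by
    intro g
    have hc : ((X - C ((χ₁ g : K))) * (X - C ((χ₂ g : K)))).coeff 1
        = -((χ₁ g : K) + (χ₂ g : K)) := by
      have : (X - C ((χ₁ g : K))) * (X - C ((χ₂ g : K)))
          = X^2 - C ((χ₁ g : K) + (χ₂ g : K)) * X + C ((χ₁ g : K) * (χ₂ g : K)) := by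
        simp [C_add, C_mul]; ring
      rw [this]
      simp [coeff_one, coeff_X, pow_two]
    have := trace_eq_neg_charpoly_coeff (ρ g : Matrix (Fin 2) (Fin 2) K)
    rw [hchar g] at this
    simpa [hc] using this
  by_cases hall : ∀ g : G, (ρ g : Matrix (Fin 2) (Fin 2) K) = (χ₂ g : K) • 1
  · refine ⟨1, fun _ => 0, fun g => ?_⟩
    have heq : (χ₁ g : K) = (χ₂ g : K) := by
      have h := htr g
      rw [hall g] at h
      simp [trace_smul, trace_one, Fin.sum_univ_two] at h
      linear_combination -h
    simp only [inv_one, Units.val_one, one_mul, mul_one]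
    rw [hall g]
    ext i j
    fin_cases i <;> fin_cases j <;>
      simp [Matrix.smul_apply, Matrix.one_apply, heq]
  · push_neg at hall
    obtain ⟨g₀, hg₀⟩ := hall
    set N : Matrix (Fin 2) (Fin 2) K :=
      (ρ g₀ : Matrix (Fin 2) (Fin 2) K) - (χ₂ g₀ : K) • 1 with hNdef
    have hN : N ≠ 0 := sub_ne_zero.mpr hg₀
    obtain ⟨i₀, j₀, hij⟩ : ∃ i j, N i j ≠ 0 := by
      by_contra h
      push_neg at h
      exact hN (Matrix.ext fun i j => h i j)
    set v : Fin 2 → K := fun i => N i j₀ with hvdef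
    have hv : v ≠ 0 := fun h => hij (congrFun h i₀)
    have heig : ∀ g : G, (ρ g : Matrix (Fin 2) (Fin 2) K) *ᵥ v = (χ₁ g : K) • v := by
      intro g
      have h := hprod g g₀
      have h2 : (((ρ g : Matrix (Fin 2) (Fin 2) K) - (χ₁ g : K) • 1) * N) *ᵥ
          (Pi.single j₀ (1 : K)) = 0 := by rw [h, Matrix.zero_mulVec]
      rw [← mulVec_mulVec, mulVec_single] at h2
      have h3 : ((ρ g : Matrix (Fin 2) (Fin 2) K) - (χ₁ g : K) • 1) *ᵥ v = 0 := by
        simpa [hvdef, mul_one] using h2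
      rw [sub_mulVec, smul_mulVec, one_mulVec, sub_eq_zero] at h3
      exact h3
    have hvcase : v 0 ≠ 0 ∨ v 1 ≠ 0 := by
      by_contra h
      push_neg at h
      apply hv
      funext i
      fin_cases i <;> simp [h.1, h.2]
    set w : Fin 2 → K := if v 0 = 0 then ![1, 0] else ![0, 1] with hwdef
    set Mm : Matrix (Fin 2) (Fin 2) K := !![v 0, w 0; v 1, w 1] with hMdef
    have hdet : Mm.det ≠ 0 := by
      rw [hMdef, det_fin_two_of]
      by_cases h0 : v 0 = 0
      · have h1 : v 1 ≠ 0 := hvcase.resolve_left (by simpa [h0])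
        simp [hwdef, h0, h1]
      · simp [hwdef, h0]
    have hU : IsUnit Mm := (Matrix.isUnit_iff_isUnit_det Mm).mpr (isUnit_iff_ne_zero.mpr hdet)
    refine ⟨hU.unit, fun g => (((hU.unit⁻¹ : GL (Fin 2) K) : Matrix (Fin 2) (Fin 2) K) *
        (ρ g : Matrix (Fin 2) (Fin 2) K) * Mm) 0 1, fun g => ?_⟩
    have hUc : ((hU.unit : GL (Fin 2) K) : Matrix (Fin 2) (Fin 2) K) = Mm := hU.unit_spec
    set Minv : Matrix (Fin 2) (Fin 2) K :=
      ((hU.unit⁻¹ : GL (Fin 2) K) : Matrix (Fin 2) (Fin 2) K) with hMinv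
    have hinv : Minv * Mm = 1 := by
      rw [← hUc]; exact_mod_cast hU.unit.inv_mul
    have hinv' : Mm * Minv = 1 := by
      rw [← hUc]; exact_mod_cast hU.unit.mul_inv
    set B : Matrix (Fin 2) (Fin 2) K := Minv * (ρ g : Matrix (Fin 2) (Fin 2) K) * Mm with hB
    have hMe : Mm *ᵥ (Pi.single (0 : Fin 2) (1 : K)) = v := by
      funext i
      fin_cases i <;> simp [hMdef, mulVec, dotProduct, Fin.sum_univ_two]
    have hMinvV : Minv *ᵥ v = (Pi.single (0 : Fin 2) (1 : K) : Fin 2 → K) := by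
      rw [← hMe, mulVec_mulVec, hinv, one_mulVec]
    have hcol : B *ᵥ (Pi.single (0 : Fin 2) (1 : K))
        = (χ₁ g : K) • (Pi.single (0 : Fin 2) (1 : K) : Fin 2 → K) := by
      rw [hB, ← mulVec_mulVec, ← mulVec_mulVec, hMe, heig, mulVec_smul, hMinvV]
    have hB00 : B 0 0 = (χ₁ g : K) := by
      have := congrFun hcol 0
      simpa [mulVec, dotProduct, Fin.sum_univ_two, Pi.single_apply] using this
    have hB10 : B 1 0 = 0 := by
      have := congrFun hcol 1
      simpa [mulVec, dotProduct, Fin.sum_univ_two, Pi.single_apply] using this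
    have htrB : B 0 0 + B 1 1 = (χ₁ g : K) + (χ₂ g : K) := by
      have h : trace B = trace (ρ g : Matrix (Fin 2) (Fin 2) K) := by
        rw [hB, trace_mul_cycle, hinv', one_mul]
      rw [htr g] at h
      simpa [trace_fin_two] using h
    have hB11 : B 1 1 = (χ₂ g : K) := by
      rw [hB00] at htrB
      exact add_left_cancel htrB
    rw [show ((hU.unit : GL (Fin 2) K) : Matrix (Fin 2) (Fin 2) K) = Mm from hUc]
    show B = _
    ext i j
    fin_cases i <;> fin_cases j <;>
      simp [hB00, hB10, hB11] <;> rfl
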